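/- Let P and Q be finite posets on [d]. If P and Q possess a common linear extension, then the twinned order polytope Δ(P,−Q) ⊂ ℝ^d is a lattice polytope containing the origin in its interior whose vertices all lie in {−1,0,1}^d (it is a Fano-type polytope: a full-dimensional lattice polytope with 0 in its interior). -/

import Mathlib

/-- A poset ideal (down-set) of a partial order `P` on `Fin d`. -/
def IsIdeal {d : ℕ} (P : PartialOrder (Fin d)) (I : Set (Fin d)) : Prop :=
  ∀ ⦃i j : Fin d⦄, i ∈ I → P.le j i → j ∈ I

/-- The indicator vector `ρ(I) = Σ_{i ∈ I} e_i` of a subset of `[d]`. -/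
noncomputable def rho {d : ℕ} (I : Set (Fin d)) : Fin d → ℝ := I.indicator 1

/-- `σ` is a linear extension of `P`: if `p_{σ a} < p_{σ b}` in `P` then `a < b`. -/
def IsLinExt {d : ℕ} (P : PartialOrder (Fin d)) (σ : Equiv.Perm (Fin d)) : Prop :=
  ∀ a b : Fin d, P.lt (σ a) (σ b) → a < b

/-- `Ω(P, -Q)`. -/
noncomputable def Omega {d : ℕ} (P Q : PartialOrder (Fin d)) : Set (Fin d → ℝ) :=
  {v | ∃ I : Set (Fin d), IsIdeal P I ∧ I.Nonempty ∧ v = rho I} ∪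
  {v | ∃ J : Set (Fin d), IsIdeal Q J ∧ J.Nonempty ∧ v = - rho J} ∪ {0}

lemma ideal_of_linext {d : ℕ} (P : PartialOrder (Fin d)) (σ : Equiv.Perm (Fin d))
    (hP : IsLinExt P σ) (k : Fin d) : IsIdeal P {j | σ.symm j ≤ k} := by
  intro i j hi hji
  rcases eq_or_ne j i with rfl | hne
  · exact hi
  · have hlt : P.lt j i := by
      rw [P.lt_iff_le_not_ge]
      exact ⟨hji, fun h => hne (P.le_antisymm _ _ hji h)⟩
    have := hP (σ.symm j) (σ.symm i) (by simpa using hlt)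
    have hi' : σ.symm i ≤ k := hi
    have h1 : ((σ.symm j : Fin d) : ℕ) < ((σ.symm i : Fin d) : ℕ) := this
    have h2 : ((σ.symm i : Fin d) : ℕ) ≤ (k : ℕ) := Fin.le_def.mp hi'
    show σ.symm j ≤ k
    exact Fin.le_def.mpr (le_of_lt (lt_of_lt_of_le h1 h2))

theorem twinned_is_fano_type {d : ℕ} (P Q : PartialOrder (Fin d))
    (σ : Equiv.Perm (Fin d)) (hP : IsLinExt P σ) (hQ : IsLinExt Q σ) :
    (∀ v ∈ Omega P Q, ∀ i : Fin d, v i = -1 ∨ v i = 0 ∨ v i = 1) ∧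
    (0 : Fin d → ℝ) ∈ interior (convexHull ℝ (Omega P Q)) := by
  constructor
  · rintro v ((⟨I, _, _, rfl⟩ | ⟨J, _, _, rfl⟩) | hv) i
    · by_cases h : i ∈ I
      · right; right; simp [rho, Set.indicator_of_mem h]
      · right; left; simp [rho, Set.indicator_of_notMem h]
    · by_cases h : i ∈ J
      · left; simp [rho, Set.indicator_of_mem h]
      · right; left; simp [rho, Set.indicator_of_notMem h]
    · right; left; simp only [Set.mem_singleton_iff] at hv; simp [hv]
  · -- the staircase vectors
    set b : Fin d → (Fin d → ℝ) := fun k => rho {j | σ.symm j ≤ k} with hb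
    have hzero : (0 : Fin d → ℝ) ∈ Omega P Q := Or.inr rfl
    have hbmem : ∀ k, b k ∈ Omega P Q := fun k =>
      Or.inl (Or.inl ⟨_, ideal_of_linext P σ hP k, ⟨σ k, by simp⟩, rfl⟩)
    have hnbmem : ∀ k, -(b k) ∈ Omega P Q := fun k =>
      Or.inl (Or.inr ⟨_, ideal_of_linext Q σ hQ k, ⟨σ k, by simp⟩, rfl⟩)
    set ε : ℝ := (2 * (d + 1))⁻¹ with hε
    have hεpos : 0 < ε := by positivity
    have hball : Metric.ball (0 : Fin d → ℝ) ε ⊆ convexHull ℝ (Omega P Q) := by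
      intro x hx
      rw [mem_ball_zero_iff] at hx
      have hxi : ∀ i, |x i| < ε := by
        intro i
        calc |x i| = ‖x i‖ := rfl
          _ ≤ ‖x‖ := norm_le_pi_norm x i
          _ < ε := hx
      -- coefficients
      set g : ℕ → ℝ := fun n => if h : n < d then x (σ ⟨n, h⟩) else 0 with hg
      have hgabs : ∀ n, |g n| ≤ ε := by
        intro n
        by_cases h : n < d
        · simp only [hg, dif_pos h]; exact (hxi _).le
        · simp [hg, dif_neg h, hεpos.le]
      set c : Fin d → ℝ := fun k => g k - g (k + 1) with hc
      have hcabs : ∀ k, |c k| ≤ 2 * ε := by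
        intro k
        calc |c k| ≤ |g k| + |g (k + 1)| := abs_sub _ _
          _ ≤ ε + ε := add_le_add (hgabs _) (hgabs _)
          _ = 2 * ε := by ring
      have hsumabs : ∑ k : Fin d, |c k| ≤ 1 := by
        calc ∑ k : Fin d, |c k| ≤ ∑ _k : Fin d, 2 * ε :=
              Finset.sum_le_sum fun k _ => hcabs k
          _ = d * (2 * ε) := by simp [mul_comm]
          _ ≤ 1 := by
              have h2 : (0:ℝ) < 2 * ((d:ℝ) + 1) := by positivity
              rw [hε, show (d:ℝ) * (2 * (2 * ((d:ℝ) + 1))⁻¹)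
                  = (2 * (d:ℝ)) * (2 * ((d:ℝ) + 1))⁻¹ from by ring,
                mul_inv_le_iff₀ h2]
              linarith
      -- x is the corresponding linear combination of the b k
      have hrep : x = ∑ k : Fin d, c k • b k := by
        funext i
        have hbi : ∀ k : Fin d, b k i = if (σ.symm i : ℕ) ≤ (k : ℕ) then 1 else 0 := by
          intro k
          by_cases h : σ.symm i ≤ k
          · rw [if_pos (Fin.le_def.mp h)]
            simp only [hb, rho]
            have h' : i ∈ {j | σ.symm j ≤ k} := h
            rw [Set.indicator_of_mem h']; rfl
          · rw [if_neg (fun h' => h (Fin.le_def.mpr h'))]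
            simp only [hb, rho]
            have h' : i ∉ {j | σ.symm j ≤ k} := h
            rw [Set.indicator_of_notMem h']
        have : (∑ k : Fin d, c k • b k) i
            = ∑ k : Fin d, (if ((σ.symm i : ℕ)) ≤ (k : ℕ) then g k - g (k + 1) else 0) := by
          rw [Finset.sum_apply]
          refine Finset.sum_congr rfl fun k _ => ?_
          rw [Pi.smul_apply, hbi k, smul_eq_mul]
          by_cases h : (σ.symm i : ℕ) ≤ (k : ℕ) <;> simp [h, hc]
        rw [this]
        rw [Fin.sum_univ_eq_sum_range (fun n => if ((σ.symm i : ℕ)) ≤ n then g n - g (n + 1) else 0) d]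
        rw [← Finset.sum_filter]
        have hfil : (Finset.range d).filter (fun n => (σ.symm i : ℕ) ≤ n)
            = Finset.Ico ((σ.symm i : ℕ)) d := by
          ext n; simp [Finset.mem_filter, Finset.mem_Ico, and_comm]
        rw [hfil]
        have hle : (σ.symm i : ℕ) ≤ d := (σ.symm i).2.le
        rw [Finset.sum_Ico_eq_sub _ hle, Finset.sum_range_sub' g d,
          Finset.sum_range_sub' g ((σ.symm i : ℕ))]
        have hgd : g d = 0 := by simp [hg]
        have hga : g ((σ.symm i : ℕ)) = x i := by
          simp only [hg, dif_pos (σ.symm i).2]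
          congr 1
          have : (⟨((σ.symm i : ℕ)), (σ.symm i).2⟩ : Fin d) = σ.symm i := rfl
          rw [this, Equiv.apply_symm_apply]
        rw [hgd, hga]; ring
      -- convex combination
      have hconv : Convex ℝ (convexHull ℝ (Omega P Q)) := convex_convexHull ℝ _
      set q : Option (Fin d) → (Fin d → ℝ) :=
        fun o => o.elim 0 (fun k => if 0 ≤ c k then b k else -(b k)) with hq
      set w : Option (Fin d) → ℝ :=
        fun o => o.elim (1 - ∑ k : Fin d, |c k|) (fun k => |c k|) with hw
      have hwnn : ∀ o ∈ Finset.univ, 0 ≤ w o := by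
        rintro (_ | k) _
        · simpa [hw] using hsumabs
        · simp [hw, abs_nonneg]
      have hwsum : ∑ o : Option (Fin d), w o = 1 := by
        rw [Fintype.sum_option]; simp [hw]
      have hqmem : ∀ o ∈ Finset.univ, q o ∈ convexHull ℝ (Omega P Q) := by
        rintro (_ | k) _
        · exact subset_convexHull ℝ _ hzero
        · by_cases h : 0 ≤ c k
          · simpa [hq, h] using subset_convexHull ℝ _ (hbmem k)
          · simpa [hq, h] using subset_convexHull ℝ _ (hnbmem k)
      have hxsum : x = ∑ o : Option (Fin d), w o • q o := by
        rw [Fintype.sum_option]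
        have : ∀ k : Fin d, w (some k) • q (some k) = c k • b k := by
          intro k
          by_cases h : 0 ≤ c k
          · simp [hw, hq, h, abs_of_nonneg h]
          · push_neg at h
            simp [hw, hq, not_le.mpr h, abs_of_neg h, neg_smul, smul_neg]
        simp only [this]
        simp [hw, hq, hrep]
      rw [hxsum]
      exact hconv.sum_mem hwnn hwsum hqmem
    exact mem_interior.mpr ⟨Metric.ball 0 ε, hball, Metric.isOpen_ball, Metric.mem_ball_self hεpos⟩
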